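/- Let F ⊆ 2^[n] contain no s pairwise disjoint sets. Fix pairwise disjoint A_1,...,A_{s−1} ∈ F and pairwise disjoint B_1,...,B_{s−1} ∈ F, and integers 0 ≤ k_1 < k_2 ≤ s−1. Define f(x) = ∏_{j ∈ A_1∪...∪A_{k_1}} x_j · ∏_{j ∈ A_{k_1+1}∪...∪A_{s−1}} (1−x_j) and g(x) = ∏_{j ∈ B_1∪...∪B_{k_2}} x_j · ∏_{j ∈ B_{k_2+1}∪...∪B_{s−1}} (1−x_j). Then f(x)·g(x) = 0 for every x ∈ {0,1}^n. -/

import Mathlib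

open Finset
open scoped Classical

noncomputable section

/-- `F` contains `s` pairwise disjoint sets (a matching of size `s`). -/
def HasMatching {n : ℕ} (s : ℕ) (F : Finset (Finset (Fin n))) : Prop :=
  ∃ A : Fin s → Finset (Fin n), (∀ i, A i ∈ F) ∧
    ∀ i j : Fin s, i ≠ j → Disjoint (A i) (A j)

/-- `F` is `s`-saturated: it has no matching of size `s`, and adding any set
not in `F` creates one. -/
def Saturated {n : ℕ} (s : ℕ) (F : Finset (Finset (Fin n))) : Prop :=
  ¬ HasMatching s F ∧ ∀ A : Finset (Fin n), A ∉ F → HasMatching s (insert A F)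

/-- Disjoint occurrence of two families. -/
def box {n : ℕ} (𝒜 ℬ : Finset (Finset (Fin n))) : Finset (Finset (Fin n)) :=
  Finset.univ.filter fun S => ∃ a ∈ 𝒜, ∃ b ∈ ℬ, Disjoint a b ∧ S = a ∪ b

/-- `boxPow U F m` is `F^{□m}` over ground set `U`: the family of unions of `m`
pairwise disjoint members of `F`, with `F^{□0} := 2^U`. -/
def boxPow {n : ℕ} (U : Finset (Fin n)) (F : Finset (Finset (Fin n))) :
    ℕ → Finset (Finset (Fin n))
  | 0 => U.powerset
  | (m+1) => U.powerset.filter fun S => ∃ A : Fin (m+1) → Finset (Fin n),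
      (∀ i, A i ∈ F) ∧ (∀ i j : Fin (m+1), i ≠ j → Disjoint (A i) (A j)) ∧
      S = Finset.univ.sup A

/-- A family is increasing if it is closed under supersets. -/
def Increasing {n : ℕ} (F : Finset (Finset (Fin n))) : Prop :=
  ∀ a ∈ F, ∀ b : Finset (Fin n), a ⊆ b → b ∈ F

/-- `S` is a disjoint union of (possibly zero) members of `F`. -/
def IsDisjUnionOf {n : ℕ} (F : Finset (Finset (Fin n))) (S : Finset (Fin n)) : Prop :=
  ∃ (m : ℕ) (A : Fin m → Finset (Fin n)), (∀ i, A i ∈ F) ∧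
    (∀ i j : Fin m, i ≠ j → Disjoint (A i) (A j)) ∧ S = Finset.univ.sup A

/-- the two polynomials built from two matchings of `F` with
parameters `k₁ < k₂` multiply to zero on `{0,1}^n`. -/
theorem product_eq_zero {n s : ℕ} (hn : 1 ≤ n) (hs : 2 ≤ s)
    (F : Finset (Finset (Fin n))) (hF : ¬ HasMatching s F)
    (k₁ k₂ : ℕ) (hk : k₁ < k₂) (hk₂ : k₂ ≤ s - 1)
    (A B : Fin (s - 1) → Finset (Fin n))
    (hAF : ∀ i, A i ∈ F) (hBF : ∀ i, B i ∈ F)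
    (hA : ∀ i j, i ≠ j → Disjoint (A i) (A j))
    (hB : ∀ i j, i ≠ j → Disjoint (B i) (B j))
    (x : Fin n → ℝ) (hx : ∀ i, x i = 0 ∨ x i = 1) :
    ((∏ j ∈ (Finset.univ.filter fun i : Fin (s - 1) => (i : ℕ) < k₁).sup A, x j) *
        ∏ j ∈ (Finset.univ.filter fun i : Fin (s - 1) => k₁ ≤ (i : ℕ)).sup A, (1 - x j)) *
      ((∏ j ∈ (Finset.univ.filter fun i : Fin (s - 1) => (i : ℕ) < k₂).sup B, x j) *
        ∏ j ∈ (Finset.univ.filter fun i : Fin (s - 1) => k₂ ≤ (i : ℕ)).sup B, (1 - x j))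
      = 0 := by
  by_contra h
  have hk₁s : k₁ < s - 1 := lt_of_lt_of_le hk hk₂
  -- extract pointwise info from nonvanishing product
  have h1 : ∀ t ∈ (Finset.univ.filter fun i : Fin (s - 1) => (i : ℕ) < k₁).sup A, x t = 1 := by
    intro t ht
    have := (Finset.prod_ne_zero_iff.1 (left_ne_zero_of_mul (left_ne_zero_of_mul h))) t ht
    rcases hx t with h0 | h0 <;> simp_all
  have h2 : ∀ t ∈ (Finset.univ.filter fun i : Fin (s - 1) => k₁ ≤ (i : ℕ)).sup A, x t = 0 := by
    intro t ht
    have := (Finset.prod_ne_zero_iff.1 (right_ne_zero_of_mul (left_ne_zero_of_mul h))) t ht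
    rcases hx t with h0 | h0
    · exact h0
    · simp [h0] at this
  have h3 : ∀ t ∈ (Finset.univ.filter fun i : Fin (s - 1) => (i : ℕ) < k₂).sup B, x t = 1 := by
    intro t ht
    have := (Finset.prod_ne_zero_iff.1 (left_ne_zero_of_mul (right_ne_zero_of_mul h))) t ht
    rcases hx t with h0 | h0 <;> simp_all
  -- disjointness between late A's and early B's
  have hAB : ∀ iA : Fin (s - 1), k₁ ≤ (iA : ℕ) → ∀ iB : Fin (s - 1), (iB : ℕ) < k₂ →
      Disjoint (A iA) (B iB) := by
    intro iA hiA iB hiB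
    rw [Finset.disjoint_left]
    intro t htA htB
    have e0 : x t = 0 := h2 t (Finset.mem_of_subset
      (Finset.le_sup (f := A) (Finset.mem_filter.2 ⟨Finset.mem_univ iA, hiA⟩)) htA)
    have e1 : x t = 1 := h3 t (Finset.mem_of_subset
      (Finset.le_sup (f := B) (Finset.mem_filter.2 ⟨Finset.mem_univ iB, hiB⟩)) htB)
    rw [e0] at e1; norm_num at e1
  -- build a matching of size s
  set a := s - 1 - k₁ with ha
  have has : a ≤ s := by omega
  refine hF ?_
  refine ⟨fun i => if hi : (i : ℕ) < a then A ⟨k₁ + i, by omega⟩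
    else B ⟨(i : ℕ) - a, by have := i.2; omega⟩, ?_, ?_⟩
  · intro i
    by_cases hi : (i : ℕ) < a <;> simp [hi, hAF, hBF]
  · intro i j hij
    have hij' : (i : ℕ) ≠ (j : ℕ) := fun e => hij (Fin.ext e)
    by_cases hi : (i : ℕ) < a <;> by_cases hj : (j : ℕ) < a <;>
      simp only [hi, hj, dif_pos, dif_neg, not_false_iff]
    · exact hA _ _ (by simp [Fin.ext_iff]; omega)
    · exact hAB _ (by simp) _ (by simp; omega)
    · exact (hAB _ (by simp) _ (by simp; omega)).symm
    · exact hB _ _ (by simp [Fin.ext_iff]; omega)
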